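/- arXiv:1801.06849 — 3 statements merged into one kernel-verified Lean document; each statement's English description precedes it below -/
import Mathlib

section
/- Let A ⊆ ℝⁿ and B ⊆ ℝᵐ be subsets with 0 ∈ A and 0 ∈ B, and suppose there exists a bi-Lipschitz homeomorphism h : A → B (with respect to the outer metrics, i.e. the Euclidean distances restricted to A and B) with h(0) = 0. Then there exists a bi-Lipschitz homeomorphism Φ : ℝⁿ × ℝᵐ → ℝⁿ × ℝᵐ such that Φ(A × {0}) = {0} × B and Φ(0,0) = (0,0). In other words, (A × {0}, 0) and ({0} × B, 0) are ambient bi-Lipschitz equivalent in ℝⁿ⁺ᵐ. -/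
open Set
open scoped NNReal

/-- Any Lipschitz map on a subset with values in a Euclidean space extends to a globally
Lipschitz map (with a possibly larger constant). -/
lemma exists_lipschitz_extension_euclidean {α : Type*} [PseudoMetricSpace α] {m : ℕ}
    {f : α → EuclideanSpace ℝ (Fin m)} {s : Set α} {C : ℝ≥0}
    (hf : LipschitzOnWith C f s) :
    ∃ g : α → EuclideanSpace ℝ (Fin m), ∃ C' : ℝ≥0, LipschitzWith C' g ∧ Set.EqOn f g s := by
  have h1 : LipschitzOnWith (1 * C) (fun x => (WithLp.equiv 2 (Fin m → ℝ)) (f x)) s :=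
    (PiLp.lipschitzWith_ofLp 2 _).comp_lipschitzOnWith hf
  obtain ⟨g', hg', heq⟩ := h1.extend_pi
  refine ⟨fun x => (WithLp.equiv 2 (Fin m → ℝ)).symm (g' x), _,
    ((PiLp.antilipschitzWith_ofLp 2 _).to_rightInverse
      (WithLp.equiv 2 (Fin m → ℝ)).right_inv).comp hg', fun x hx => ?_⟩
  simp [← heq hx]

/-- If `A ⊆ ℝⁿ`, `B ⊆ ℝᵐ` contain the origin and there is a bi-Lipschitz homeomorphism
`h : A → B` (for the outer metrics) with `h 0 = 0`, then there is a bi-Lipschitz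
homeomorphism `Φ` of `ℝⁿ × ℝᵐ = ℝ^{n+m}` (with the Euclidean, i.e. `L²`, product metric)
onto itself with `Φ (A × {0}) = {0} × B` and `Φ (0, 0) = (0, 0)`: the germs `(A × {0}, 0)`
and `({0} × B, 0)` are ambient bi-Lipschitz equivalent in `ℝ^{n+m}`. -/
theorem ambient_biLipschitz_of_biLipschitz
    {n m : ℕ} (A : Set (EuclideanSpace ℝ (Fin n))) (B : Set (EuclideanSpace ℝ (Fin m)))
    (hA : (0 : EuclideanSpace ℝ (Fin n)) ∈ A) (hB : (0 : EuclideanSpace ℝ (Fin m)) ∈ B)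
    (h : A → B) (hbij : Function.Bijective h)
    (K : ℝ) (hK : 1 ≤ K)
    (hlip : ∀ x y : A, (1 / K) * dist (x : EuclideanSpace ℝ (Fin n)) (y : EuclideanSpace ℝ (Fin n)) ≤
        dist (h x : EuclideanSpace ℝ (Fin m)) (h y : EuclideanSpace ℝ (Fin m)) ∧
      dist (h x : EuclideanSpace ℝ (Fin m)) (h y : EuclideanSpace ℝ (Fin m)) ≤
        K * dist (x : EuclideanSpace ℝ (Fin n)) (y : EuclideanSpace ℝ (Fin n)))
    (h0 : (h ⟨0, hA⟩ : EuclideanSpace ℝ (Fin m)) = 0) :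
    ∃ Φ : WithLp 2 (EuclideanSpace ℝ (Fin n) × EuclideanSpace ℝ (Fin m)) →
          WithLp 2 (EuclideanSpace ℝ (Fin n) × EuclideanSpace ℝ (Fin m)),
      Function.Bijective Φ ∧
      (∃ L : ℝ, 1 ≤ L ∧ ∀ p q, (1 / L) * dist p q ≤ dist (Φ p) (Φ q) ∧
        dist (Φ p) (Φ q) ≤ L * dist p q) ∧
      Φ '' {p | (WithLp.equiv 2 _ p).1 ∈ A ∧ (WithLp.equiv 2 _ p).2 = 0} =
        {p | (WithLp.equiv 2 _ p).1 = 0 ∧ (WithLp.equiv 2 _ p).2 ∈ B} ∧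
      Φ ((WithLp.equiv 2 _).symm (0, 0)) = (WithLp.equiv 2 _).symm (0, 0) := by
  classical
  have hK0 : (0:ℝ) < K := lt_of_lt_of_le one_pos hK
  set K' : ℝ≥0 := ⟨K, hK0.le⟩ with hK'
  have hK'coe : (K' : ℝ) = K := rfl
  set e : A ≃ B := Equiv.ofBijective h hbij with he
  have heapp : ∀ x : A, e x = h x := fun x => rfl
  -- the functions on the ambient spaces
  set f : EuclideanSpace ℝ (Fin n) → EuclideanSpace ℝ (Fin m) :=
    fun x => if hx : x ∈ A then (h ⟨x, hx⟩ : EuclideanSpace ℝ (Fin m)) else 0 with hf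
  set g : EuclideanSpace ℝ (Fin m) → EuclideanSpace ℝ (Fin n) :=
    fun y => if hy : y ∈ B then (e.symm ⟨y, hy⟩ : EuclideanSpace ℝ (Fin n)) else 0 with hg
  have hfA : ∀ x (hx : x ∈ A), f x = (h ⟨x, hx⟩ : EuclideanSpace ℝ (Fin m)) :=
    fun x hx => by simp [hf, hx]
  have hgB : ∀ y (hy : y ∈ B), g y = (e.symm ⟨y, hy⟩ : EuclideanSpace ℝ (Fin n)) :=
    fun y hy => by simp [hg, hy]
  have hflip : LipschitzOnWith K' f A := by
    apply LipschitzOnWith.of_dist_le_mul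
    intro x hx y hy
    rw [hfA x hx, hfA y hy, hK'coe]
    exact (hlip ⟨x, hx⟩ ⟨y, hy⟩).2
  have hglip : LipschitzOnWith K' g B := by
    apply LipschitzOnWith.of_dist_le_mul
    intro y₁ hy₁ y₂ hy₂
    rw [hgB y₁ hy₁, hgB y₂ hy₂, hK'coe]
    have h1 := (hlip (e.symm ⟨y₁, hy₁⟩) (e.symm ⟨y₂, hy₂⟩)).1
    have h2 : h (e.symm ⟨y₁, hy₁⟩) = (⟨y₁, hy₁⟩ : B) := by
      rw [← heapp]; exact e.apply_symm_apply _
    have h3 : h (e.symm ⟨y₂, hy₂⟩) = (⟨y₂, hy₂⟩ : B) := by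
      rw [← heapp]; exact e.apply_symm_apply _
    rw [h2, h3] at h1
    rw [one_div, inv_mul_le_iff₀ hK0] at h1
    exact h1
  obtain ⟨H, CH, hH, hHeq⟩ := exists_lipschitz_extension_euclidean hflip
  obtain ⟨G, CG, hG, hGeq⟩ := exists_lipschitz_extension_euclidean hglip
  have hHA : ∀ x (hx : x ∈ A), H x = (h ⟨x, hx⟩ : EuclideanSpace ℝ (Fin m)) :=
    fun x hx => (hHeq hx).symm.trans (hfA x hx)
  have hGB : ∀ y (hy : y ∈ B), G y = (e.symm ⟨y, hy⟩ : EuclideanSpace ℝ (Fin n)) :=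
    fun y hy => (hGeq hy).symm.trans (hgB y hy)
  have hH0 : H 0 = 0 := by rw [hHA 0 hA, h0]
  have hGH : ∀ x : A, G (H x) = x := by
    intro x
    rw [hHA x x.2, hGB _ (h x).2]
    have h4 : (⟨(h x : EuclideanSpace ℝ (Fin m)), (h x).2⟩ : B) = h x := rfl
    rw [h4, ← heapp, e.symm_apply_apply]
  have hG0 : G 0 = 0 := by
    have := hGH ⟨0, hA⟩
    rwa [hHA 0 hA, h0] at this
  -- the shear maps on the plain product
  set Φ₀ : EuclideanSpace ℝ (Fin n) × EuclideanSpace ℝ (Fin m) →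
      EuclideanSpace ℝ (Fin n) × EuclideanSpace ℝ (Fin m) :=
    fun p => (p.1 - G (p.2 + H p.1), p.2 + H p.1) with hΦ₀
  set Ψ₀ : EuclideanSpace ℝ (Fin n) × EuclideanSpace ℝ (Fin m) →
      EuclideanSpace ℝ (Fin n) × EuclideanSpace ℝ (Fin m) :=
    fun p => (p.1 + G p.2, p.2 - H (p.1 + G p.2)) with hΨ₀
  have hΨΦ : ∀ p, Ψ₀ (Φ₀ p) = p := by
    intro p; simp [hΦ₀, hΨ₀]
  have hΦΨ : ∀ p, Φ₀ (Ψ₀ p) = p := by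
    intro p; simp [hΦ₀, hΨ₀]
  -- Lipschitz bounds for the shears
  obtain ⟨C1, hsum⟩ : ∃ C : ℝ≥0, LipschitzWith C
      (fun p : EuclideanSpace ℝ (Fin n) × EuclideanSpace ℝ (Fin m) => p.2 + H p.1) :=
    ⟨_, by exact LipschitzWith.prod_snd.add (hH.comp LipschitzWith.prod_fst)⟩
  obtain ⟨CΦ₀, hΦ₀lip⟩ : ∃ C : ℝ≥0, LipschitzWith C Φ₀ :=
    ⟨_, by exact LipschitzWith.prodMk (LipschitzWith.prod_fst.sub (hG.comp hsum)) hsum⟩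
  obtain ⟨C2, hsum2⟩ : ∃ C : ℝ≥0, LipschitzWith C
      (fun p : EuclideanSpace ℝ (Fin n) × EuclideanSpace ℝ (Fin m) => p.1 + G p.2) :=
    ⟨_, by exact LipschitzWith.prod_fst.add (hG.comp LipschitzWith.prod_snd)⟩
  obtain ⟨CΨ₀, hΨ₀lip⟩ : ∃ C : ℝ≥0, LipschitzWith C Ψ₀ :=
    ⟨_, by exact LipschitzWith.prodMk hsum2 (LipschitzWith.prod_snd.sub (hH.comp hsum2))⟩
  -- the map Φ on the L² product
  set eq2 := WithLp.equiv 2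
    (EuclideanSpace ℝ (Fin n) × EuclideanSpace ℝ (Fin m)) with heq2
  set Φ : WithLp 2 (EuclideanSpace ℝ (Fin n) × EuclideanSpace ℝ (Fin m)) →
      WithLp 2 (EuclideanSpace ℝ (Fin n) × EuclideanSpace ℝ (Fin m)) :=
    fun p => eq2.symm (Φ₀ (eq2 p)) with hΦdef
  set Ψ : WithLp 2 (EuclideanSpace ℝ (Fin n) × EuclideanSpace ℝ (Fin m)) →
      WithLp 2 (EuclideanSpace ℝ (Fin n) × EuclideanSpace ℝ (Fin m)) :=
    fun p => eq2.symm (Ψ₀ (eq2 p)) with hΨdef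
  have hΨΦ' : ∀ p, Ψ (Φ p) = p := by
    intro p; simp [hΦdef, hΨdef, hΨΦ]
  have hΦΨ' : ∀ p, Φ (Ψ p) = p := by
    intro p; simp [hΦdef, hΨdef, hΦΨ]
  have heqlip : LipschitzWith 1 eq2 := WithLp.prod_lipschitzWith_ofLp 2 _ _
  obtain ⟨Cs, heqsymmlip⟩ : ∃ C : ℝ≥0, LipschitzWith C eq2.symm :=
    ⟨_, (WithLp.prod_antilipschitzWith_ofLp 2 _ _).to_rightInverse eq2.right_inv⟩
  obtain ⟨CΦ, hΦlip⟩ : ∃ C : ℝ≥0, LipschitzWith C Φ :=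
    ⟨_, (heqsymmlip.comp hΦ₀lip).comp heqlip⟩
  obtain ⟨CΨ, hΨlip⟩ : ∃ C : ℝ≥0, LipschitzWith C Ψ :=
    ⟨_, (heqsymmlip.comp hΨ₀lip).comp heqlip⟩
  refine ⟨Φ, Function.bijective_iff_has_inverse.2 ⟨Ψ, hΨΦ', hΦΨ'⟩, ?_, ?_, ?_⟩
  · -- bi-Lipschitz bounds
    refine ⟨max (max (CΦ:ℝ) (CΨ:ℝ)) 1, le_max_right _ _, fun p q => ?_⟩
    set L : ℝ := max (max (CΦ:ℝ) (CΨ:ℝ)) 1 with hL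
    have hL1 : (1:ℝ) ≤ L := le_max_right _ _
    have hL0 : (0:ℝ) < L := lt_of_lt_of_le one_pos hL1
    constructor
    · rw [one_div, inv_mul_le_iff₀ hL0]
      calc dist p q = dist (Ψ (Φ p)) (Ψ (Φ q)) := by rw [hΨΦ', hΨΦ']
        _ ≤ CΨ * dist (Φ p) (Φ q) := hΨlip.dist_le_mul _ _
        _ ≤ L * dist (Φ p) (Φ q) := by
            apply mul_le_mul_of_nonneg_right _ dist_nonneg
            exact le_trans (le_max_right _ _) (le_max_left _ _)
    · calc dist (Φ p) (Φ q) ≤ CΦ * dist p q := hΦlip.dist_le_mul _ _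
        _ ≤ L * dist p q := by
            apply mul_le_mul_of_nonneg_right _ dist_nonneg
            exact le_trans (le_max_left _ _) (le_max_left _ _)
  · -- the image condition
    ext p
    simp only [Set.mem_image, Set.mem_setOf_eq]
    constructor
    · rintro ⟨q, ⟨hq1, hq2⟩, rfl⟩
      have key : Φ₀ (eq2 q) = (0, (h ⟨(eq2 q).1, hq1⟩ : EuclideanSpace ℝ (Fin m))) := by
        simp only [hΦ₀]
        rw [hq2, zero_add, hHA _ hq1]
        have h5 := hGH ⟨(eq2 q).1, hq1⟩
        rw [hHA _ hq1] at h5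
        refine Prod.ext ?_ rfl
        show (eq2 q).1 - G (h ⟨(eq2 q).1, hq1⟩ : EuclideanSpace ℝ (Fin m)) = 0
        rw [h5, sub_self]
      constructor
      · show (eq2 (eq2.symm (Φ₀ (eq2 q)))).1 = 0
        rw [eq2.apply_symm_apply, key]
      · show (eq2 (eq2.symm (Φ₀ (eq2 q)))).2 ∈ B
        rw [eq2.apply_symm_apply, key]
        exact (h _).2
    · rintro ⟨hp1, hp2⟩
      set b : B := ⟨(eq2 p).2, hp2⟩ with hb
      refine ⟨eq2.symm ((e.symm b : EuclideanSpace ℝ (Fin n)), 0), ⟨?_, ?_⟩, ?_⟩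
      · show (eq2 (eq2.symm _)).1 ∈ A
        rw [eq2.apply_symm_apply]
        exact (e.symm b).2
      · show (eq2 (eq2.symm _)).2 = 0
        rw [eq2.apply_symm_apply]
      · show eq2.symm (Φ₀ (eq2 (eq2.symm ((e.symm b : EuclideanSpace ℝ (Fin n)), 0)))) = p
        rw [eq2.apply_symm_apply]
        have h2 : h (e.symm b) = b := by rw [← heapp]; exact e.apply_symm_apply _
        have h3 : (⟨(e.symm b : EuclideanSpace ℝ (Fin n)), (e.symm b).2⟩ : A) = e.symm b := rfl
        have key : Φ₀ ((e.symm b : EuclideanSpace ℝ (Fin n)), 0) = (0, (eq2 p).2) := by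
          simp only [hΦ₀]
          rw [zero_add, hHA _ (e.symm b).2, h3, h2]
          refine Prod.ext ?_ rfl
          have h6 := hGH (e.symm b)
          rw [hHA _ (e.symm b).2, h3, h2] at h6
          rw [h6, sub_self]
        rw [key]
        apply eq2.injective
        rw [eq2.apply_symm_apply]
        exact (Prod.ext hp1 rfl : eq2 p = (0, (eq2 p).2)).symm
  · -- fixes the origin
    show eq2.symm (Φ₀ (eq2 (eq2.symm (0,0)))) = eq2.symm (0,0)
    rw [eq2.apply_symm_apply]
    congr 1
    simp [hΦ₀, hH0, hG0]
end

section
/- Let E and F be real normed vector spaces, let S be a subset of the unit sphere of E and S' a subset of the unit sphere of F, and let h : S → S' be a bijection for which there is K ≥ 1 with (1/K)·‖x − y‖ ≤ ‖h(x) − h(y)‖ ≤ K·‖x − y‖ for all x, y ∈ S. Define the cone Cone(S) = {t·x : t ∈ [0,∞), x ∈ S} and similarly Cone(S'), and define H : Cone(S) → Cone(S') by H(0) = 0 and H(v) = ‖v‖ · h(v/‖v‖) for v ≠ 0. Then H is a well-defined bijection from Cone(S) onto Cone(S'), and H is bi-Lipschitz: there exists a constant L ≥ 1 with (1/L)·‖v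 − w‖ ≤ ‖H(v) − H(w)‖ ≤ L·‖v − w‖ for all v, w ∈ Cone(S). -/
private lemma cone_aux {E F : Type*} [NormedAddCommGroup E] [NormedSpace ℝ E]
    [NormedAddCommGroup F] [NormedSpace ℝ F]
    (K : ℝ) (hK : 1 ≤ K) (s t : ℝ) (hs : 0 ≤ s) (ht : 0 ≤ t)
    (a b : E) (c d : F) (ha : ‖a‖ = 1) (hb : ‖b‖ = 1) (hc : ‖c‖ = 1)
    (hcd : ‖c - d‖ ≤ K * ‖a - b‖) :
    ‖s • c - t • d‖ ≤ (3 * K) * ‖s • a - t • b‖ := by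
  have h1 : ‖s • c - t • d‖ ≤ |s - t| + t * ‖c - d‖ := by
    have e : s • c - t • d = (s - t) • c + t • (c - d) := by
      simp [sub_smul, smul_sub]

    calc ‖s • c - t • d‖ = ‖(s - t) • c + t • (c - d)‖ := by rw [e]
      _ ≤ ‖(s - t) • c‖ + ‖t • (c - d)‖ := norm_add_le _ _
      _ = |s - t| + t * ‖c - d‖ := by
          rw [norm_smul, norm_smul, hc, Real.norm_eq_abs, Real.norm_eq_abs,
            abs_of_nonneg ht, mul_one]
  have h2 : |s - t| ≤ ‖s • a - t • b‖ := by
    have := abs_norm_sub_norm_le (s • a) (t • b)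
    simpa [norm_smul, ha, hb, abs_of_nonneg hs, abs_of_nonneg ht] using this
  have h3 : t * ‖a - b‖ ≤ 2 * ‖s • a - t • b‖ := by
    have e : t • a - t • b = (t - s) • a + (s • a - t • b) := by
      simp [sub_smul]

    have h4 : ‖(t - s) • a‖ = |s - t| := by
      rw [norm_smul, ha, Real.norm_eq_abs, mul_one, abs_sub_comm]
    calc t * ‖a - b‖ = ‖t • (a - b)‖ := by
          rw [norm_smul, Real.norm_eq_abs, abs_of_nonneg ht]
      _ = ‖(t - s) • a + (s • a - t • b)‖ := by rw [smul_sub, e]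
      _ ≤ ‖(t - s) • a‖ + ‖s • a - t • b‖ := norm_add_le _ _
      _ ≤ 2 * ‖s • a - t • b‖ := by rw [h4]; linarith
  have hab : 0 ≤ ‖a - b‖ := norm_nonneg _
  have hsab : 0 ≤ ‖s • a - t • b‖ := norm_nonneg _
  have h5 : t * ‖c - d‖ ≤ K * (t * ‖a - b‖) := by
    have := mul_le_mul_of_nonneg_left hcd ht
    nlinarith
  nlinarith

/-- A bi-Lipschitz homeomorphism `h` between subsets `S`, `S'` of the unit spheres of real
normed spaces `E`, `F` induces a well-defined bi-Lipschitz bijection `H` between the cones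
`Cone S = {t • x : t ≥ 0, x ∈ S}` and `Cone S'`, given by `H 0 = 0` and
`H v = ‖v‖ • h (‖v‖⁻¹ • v)` for `v ≠ 0`. -/
theorem cone_of_biLipschitz_link
    {E F : Type*} [NormedAddCommGroup E] [NormedSpace ℝ E]
    [NormedAddCommGroup F] [NormedSpace ℝ F]
    (S : Set E) (S' : Set F)
    (hS : ∀ x ∈ S, ‖x‖ = 1) (hS' : ∀ y ∈ S', ‖y‖ = 1)
    (h : S → S') (hbij : Function.Bijective h)
    (K : ℝ) (hK : 1 ≤ K)
    (hlip : ∀ x y : S, (1 / K) * ‖(x : E) - (y : E)‖ ≤ ‖(h x : F) - (h y : F)‖ ∧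
      ‖(h x : F) - (h y : F)‖ ≤ K * ‖(x : E) - (y : E)‖)
    (coneS : Set E) (hconeS : coneS = {v : E | ∃ t : ℝ, 0 ≤ t ∧ ∃ x ∈ S, v = t • x})
    (coneS' : Set F) (hconeS' : coneS' = {w : F | ∃ t : ℝ, 0 ≤ t ∧ ∃ y ∈ S', w = t • y}) :
    -- well-definedness: every nonzero point of the cone, normalized, lies in the link
    (∀ v ∈ coneS, v ≠ 0 → ‖v‖⁻¹ • v ∈ S) ∧
    ∃ H : coneS → coneS',
      Function.Bijective H ∧
      (∀ v : coneS, (v : E) = 0 → (H v : F) = 0) ∧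
      (∀ (v : coneS) (hv : (v : E) ≠ 0) (hm : ‖(v : E)‖⁻¹ • (v : E) ∈ S),
        (H v : F) = ‖(v : E)‖ • (h ⟨‖(v : E)‖⁻¹ • (v : E), hm⟩ : F)) ∧
      ∃ L : ℝ, 1 ≤ L ∧ ∀ v w : coneS,
        (1 / L) * ‖(v : E) - (w : E)‖ ≤ ‖(H v : F) - (H w : F)‖ ∧
        ‖(H v : F) - (H w : F)‖ ≤ L * ‖(v : E) - (w : E)‖ := by
  classical
  have hK0 : (0:ℝ) < K := lt_of_lt_of_le one_pos hK
  -- part 1: normalization stays in S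
  have part1 : ∀ v ∈ coneS, v ≠ 0 → ‖v‖⁻¹ • v ∈ S := by
    intro v hv hv0
    rw [hconeS] at hv
    obtain ⟨t, ht, x, hx, rfl⟩ := hv
    have hx1 : ‖x‖ = 1 := hS x hx
    have ht0 : t ≠ 0 := by
      rintro rfl; simp at hv0
    have hnorm : ‖t • x‖ = t := by
      rw [norm_smul, hx1, Real.norm_eq_abs, abs_of_nonneg ht, mul_one]
    rw [hnorm, smul_smul, inv_mul_cancel₀ ht0, one_smul]
    exact hx
  -- membership of 0 in coneS'
  have mem0 : ∀ v : E, v ∈ coneS → (0:F) ∈ coneS' := by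
    intro v hv
    rw [hconeS] at hv
    obtain ⟨t, ht, x, hx, rfl⟩ := hv
    rw [hconeS']
    exact ⟨0, le_refl 0, (h ⟨x, hx⟩ : F), (h ⟨x, hx⟩).2, by simp⟩
  -- membership of cone points in coneS'
  have memS' : ∀ (t : ℝ), 0 ≤ t → ∀ y : S', t • (y : F) ∈ coneS' := by
    intro t ht y
    rw [hconeS']
    exact ⟨t, ht, (y : F), y.2, rfl⟩
  -- define H
  set H : coneS → coneS' := fun v =>
    if hv : (v : E) = 0 then ⟨0, mem0 v v.2⟩
    else ⟨‖(v : E)‖ • (h ⟨‖(v : E)‖⁻¹ • (v : E), part1 v v.2 hv⟩ : F),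
      memS' _ (norm_nonneg _) _⟩ with hH
  have H0 : ∀ v : coneS, (v : E) = 0 → (H v : F) = 0 := by
    intro v hv; simp [hH, hv]
  have Hne : ∀ (v : coneS) (hv : (v : E) ≠ 0) (hm : ‖(v : E)‖⁻¹ • (v : E) ∈ S),
      (H v : F) = ‖(v : E)‖ • (h ⟨‖(v : E)‖⁻¹ • (v : E), hm⟩ : F) := by
    intro v hv hm; simp [hH, hv]
  -- norms of elements of S and S'
  have normS : ∀ x : S, ‖(x : E)‖ = 1 := fun x => hS x x.2
  have normS' : ∀ y : S', ‖(y : F)‖ = 1 := fun y => hS' y y.2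
  -- representation lemma
  have rep : ∀ v : coneS, ∃ a : S, (v : E) = ‖(v : E)‖ • (a : E) ∧
      (H v : F) = ‖(v : E)‖ • (h a : F) := by
    intro v
    by_cases hv : (v : E) = 0
    · have hv2 : (v : E) ∈ {v : E | ∃ t : ℝ, 0 ≤ t ∧ ∃ x ∈ S, v = t • x} := by
        rw [← hconeS]; exact v.2
      obtain ⟨t, ht, x, hx, hvx⟩ := hv2
      refine ⟨⟨x, hx⟩, ?_, ?_⟩
      · simp [hv]
      · rw [H0 v hv, hv]; simp
    · refine ⟨⟨‖(v : E)‖⁻¹ • (v : E), part1 v v.2 hv⟩, ?_, Hne v hv _⟩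
      have : ‖(v : E)‖ ≠ 0 := norm_ne_zero_iff.mpr hv
      simp [smul_smul, mul_inv_cancel₀ this]
  -- the two-sided estimates
  have key : ∀ v w : coneS,
      (1 / (3 * K)) * ‖(v : E) - (w : E)‖ ≤ ‖(H v : F) - (H w : F)‖ ∧
      ‖(H v : F) - (H w : F)‖ ≤ (3 * K) * ‖(v : E) - (w : E)‖ := by
    intro v w
    obtain ⟨a, hva, hHa⟩ := rep v
    obtain ⟨b, hwb, hHb⟩ := rep w
    have hs : (0:ℝ) ≤ ‖(v : E)‖ := norm_nonneg _
    have ht : (0:ℝ) ≤ ‖(w : E)‖ := norm_nonneg _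
    have hup := (hlip a b).2
    have hlo := (hlip a b).1
    have hlo' : ‖(a : E) - (b : E)‖ ≤ K * ‖(h a : F) - (h b : F)‖ := by
      have h1 := mul_le_mul_of_nonneg_left hlo hK0.le
      have h2 : K * (1 / K * ‖(a : E) - (b : E)‖) = ‖(a : E) - (b : E)‖ := by
        field_simp
      linarith
    constructor
    · have := cone_aux K hK ‖(v : E)‖ ‖(w : E)‖ hs ht
        (h a : F) (h b : F) (a : E) (b : E) (normS' _) (normS' _) (normS _) hlo'
      rw [← hva, ← hwb, ← hHa, ← hHb] at this
      rw [div_mul_eq_mul_div, div_le_iff₀ (by linarith : (0:ℝ) < 3 * K)]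
      linarith
    · have := cone_aux K hK ‖(v : E)‖ ‖(w : E)‖ hs ht
        (a : E) (b : E) (h a : F) (h b : F) (normS _) (normS _) (normS' _) hup
      rw [← hva, ← hwb, ← hHa, ← hHb] at this
      exact this
  -- injectivity from lower bound
  have Hinj : Function.Injective H := by
    intro v w hvw
    have := (key v w).1
    rw [hvw, sub_self, norm_zero] at this
    have h3K : (0:ℝ) < 3 * K := by linarith
    have : ‖(v : E) - (w : E)‖ ≤ 0 := by
      have hpos : 0 < 1 / (3 * K) := by positivity
      nlinarith [norm_nonneg ((v : E) - (w : E))]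
    have : (v : E) = (w : E) := by
      have := le_antisymm this (norm_nonneg _)
      rwa [norm_eq_zero, sub_eq_zero] at this
    exact Subtype.ext this
  -- surjectivity
  have Hsurj : Function.Surjective H := by
    rintro ⟨w, hw⟩
    have hw2 : w ∈ {w : F | ∃ t : ℝ, 0 ≤ t ∧ ∃ y ∈ S', w = t • y} := by
      rw [← hconeS']; exact hw
    obtain ⟨t, ht, y, hy, hwty⟩ := hw2
    subst hwty
    obtain ⟨x, hx⟩ := hbij.2 ⟨y, hy⟩
    have hxS : (x : E) ∈ S := x.2
    have hxcone : t • (x : E) ∈ coneS := by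
      rw [hconeS]; exact ⟨t, ht, (x : E), hxS, rfl⟩
    refine ⟨⟨t • (x : E), hxcone⟩, ?_⟩
    by_cases ht0 : t = 0
    · subst ht0
      apply Subtype.ext
      rw [H0 _ (by simp)]
      simp
    · have htpos : 0 < t := lt_of_le_of_ne ht (Ne.symm ht0)
      have hx1 : ‖(x : E)‖ = 1 := normS x
      have hnorm : ‖t • (x : E)‖ = t := by
        rw [norm_smul, hx1, Real.norm_eq_abs, abs_of_nonneg ht, mul_one]
      have hne : (t • (x : E)) ≠ 0 := by
        intro hc
        rw [← norm_eq_zero] at hc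
        rw [hnorm] at hc
        exact ht0 hc
      apply Subtype.ext
      have hm : ‖t • (x : E)‖⁻¹ • (t • (x : E)) ∈ S := part1 _ hxcone hne
      rw [Hne ⟨t • (x : E), hxcone⟩ hne hm]
      have hxeq : (⟨‖t • (x : E)‖⁻¹ • (t • (x : E)), hm⟩ : S) = x := by
        apply Subtype.ext
        show ‖t • (x : E)‖⁻¹ • (t • (x : E)) = (x : E)
        rw [hnorm, smul_smul, inv_mul_cancel₀ ht0, one_smul]
      rw [hxeq, hx, hnorm]
  refine ⟨part1, H, ⟨Hinj, Hsurj⟩, H0, Hne, 3 * K, by linarith, key⟩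
end

section
/- Let C ⊆ ℝⁿ and C' ⊆ ℝᵐ be cones, i.e. sets closed under multiplication by nonnegative real scalars (in particular 0 ∈ C and 0 ∈ C'). Suppose the links S = C ∩ {x : ‖x‖ = 1} and S' = C' ∩ {x : ‖x‖ = 1} are bi-Lipschitz homeomorphic (with respect to the outer metrics). Then there exists a bi-Lipschitz homeomorphism H : C → C' with H(0) = 0; in particular the germs (C, 0) and (C', 0) are bi-Lipschitz equivalent. -/
section aux

variable {E : Type*} [NormedAddCommGroup E] [NormedSpace ℝ E]

private lemma cone_aux_upper {p q : E} (hq : ‖q‖ = 1) {r s : ℝ} (hr : 0 ≤ r) (hrs : r ≤ s) :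
    ‖r • p - s • q‖ ≤ (s - r) + r * ‖p - q‖ := by
  have h1 : r • p - s • q = r • (p - q) - (s - r) • q := by
    rw [smul_sub, sub_smul]; abel
  rw [h1]
  refine (norm_sub_le _ _).trans ?_
  rw [norm_smul, norm_smul, hq, mul_one, Real.norm_of_nonneg hr,
    Real.norm_of_nonneg (by linarith)]
  linarith

private lemma cone_aux_low1 {p q : E} (hp : ‖p‖ = 1) (hq : ‖q‖ = 1) {r s : ℝ}
    (hr : 0 ≤ r) (hs : 0 ≤ s) : s - r ≤ ‖r • p - s • q‖ := by
  have h2 := norm_sub_norm_le (s • q) (r • p)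
  rw [norm_smul, norm_smul, hp, hq, mul_one, mul_one, Real.norm_of_nonneg hs,
    Real.norm_of_nonneg hr, norm_sub_rev] at h2
  linarith

private lemma cone_aux_low2 {p q : E} (hp : ‖p‖ = 1) (hq : ‖q‖ = 1) {r s : ℝ}
    (hr : 0 ≤ r) (hs : 0 ≤ s) (hrs : r ≤ s) : r * ‖p - q‖ ≤ 2 * ‖r • p - s • q‖ := by
  have h1 : r * ‖p - q‖ = ‖r • p - r • q‖ := by
    rw [← smul_sub, norm_smul, Real.norm_of_nonneg hr]
  have h2 : ‖r • p - r • q‖ ≤ ‖r • p - s • q‖ + ‖s • q - r • q‖ :=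
    norm_sub_le_norm_sub_add_norm_sub _ _ _
  have h3 : ‖s • q - r • q‖ = s - r := by
    rw [← sub_smul, norm_smul, hq, mul_one, Real.norm_of_nonneg (by linarith)]
  have h4 := cone_aux_low1 hp hq hr hs
  linarith

private lemma cone_key {p q : E} (hp : ‖p‖ = 1) (hq : ‖q‖ = 1) {r s : ℝ}
    (hr : 0 ≤ r) (hs : 0 ≤ s) :
    |r - s| ≤ ‖r • p - s • q‖ ∧ (min r s) * ‖p - q‖ ≤ 2 * ‖r • p - s • q‖ ∧
      ‖r • p - s • q‖ ≤ |r - s| + (min r s) * ‖p - q‖ := by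
  rcases le_total r s with hrs | hrs
  · rw [abs_of_nonpos (by linarith), min_eq_left hrs]
    refine ⟨by linarith [cone_aux_low1 hp hq hr hs], cone_aux_low2 hp hq hr hs hrs,
      by linarith [cone_aux_upper (p := p) hq hr hrs]⟩
  · have e : r • p - s • q = -(s • q - r • p) := by abel
    rw [abs_of_nonneg (by linarith), min_eq_right hrs, e, norm_neg, norm_sub_rev p q]
    refine ⟨by linarith [cone_aux_low1 hq hp hs hr], cone_aux_low2 hq hp hs hr hrs,
      by linarith [cone_aux_upper (p := q) hp hs hrs]⟩

end aux

section cone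

variable {n m : ℕ} {C : Set (EuclideanSpace ℝ (Fin n))} {C' : Set (EuclideanSpace ℝ (Fin m))}

private lemma mem_link (hC : ∀ (t : ℝ), 0 ≤ t → ∀ x ∈ C, t • x ∈ C)
    {x : EuclideanSpace ℝ (Fin n)} (hx : x ∈ C) (hx0 : x ≠ 0) :
    ‖x‖⁻¹ • x ∈ C ∩ Metric.sphere (0 : EuclideanSpace ℝ (Fin n)) 1 := by
  refine ⟨hC _ (inv_nonneg.2 (norm_nonneg x)) x hx, ?_⟩
  rw [Metric.mem_sphere, dist_zero_right, norm_smul,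
    Real.norm_of_nonneg (inv_nonneg.2 (norm_nonneg x)), inv_mul_cancel₀ (norm_ne_zero_iff.2 hx0)]

open Classical in
private noncomputable def coneMap (hC'0 : (0 : EuclideanSpace ℝ (Fin m)) ∈ C')
    (hC : ∀ (t : ℝ), 0 ≤ t → ∀ x ∈ C, t • x ∈ C)
    (hC' : ∀ (t : ℝ), 0 ≤ t → ∀ y ∈ C', t • y ∈ C')
    (h : (C ∩ Metric.sphere (0 : EuclideanSpace ℝ (Fin n)) 1 : Set (EuclideanSpace ℝ (Fin n))) →
         (C' ∩ Metric.sphere (0 : EuclideanSpace ℝ (Fin m)) 1 : Set (EuclideanSpace ℝ (Fin m)))) :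
    C → C' := fun x =>
  if hx0 : (x : EuclideanSpace ℝ (Fin n)) = 0 then ⟨0, hC'0⟩
  else ⟨‖(x : EuclideanSpace ℝ (Fin n))‖ •
      (h ⟨‖(x : EuclideanSpace ℝ (Fin n))‖⁻¹ • (x : EuclideanSpace ℝ (Fin n)),
        mem_link hC x.2 hx0⟩ : EuclideanSpace ℝ (Fin m)),
    hC' _ (norm_nonneg _) _ (h _).2.1⟩

variable {hC'0 : (0 : EuclideanSpace ℝ (Fin m)) ∈ C'}
    {hC : ∀ (t : ℝ), 0 ≤ t → ∀ x ∈ C, t • x ∈ C}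
    {hC' : ∀ (t : ℝ), 0 ≤ t → ∀ y ∈ C', t • y ∈ C'}
    {h : (C ∩ Metric.sphere (0 : EuclideanSpace ℝ (Fin n)) 1 : Set (EuclideanSpace ℝ (Fin n))) →
         (C' ∩ Metric.sphere (0 : EuclideanSpace ℝ (Fin m)) 1 : Set (EuclideanSpace ℝ (Fin m)))}

private lemma coneMap_zero {x : C} (hx0 : (x : EuclideanSpace ℝ (Fin n)) = 0) :
    (coneMap hC'0 hC hC' h x : EuclideanSpace ℝ (Fin m)) = 0 := by
  simp only [coneMap]; rw [dif_pos hx0]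

private lemma coneMap_ne {x : C} (hx0 : (x : EuclideanSpace ℝ (Fin n)) ≠ 0) :
    (coneMap hC'0 hC hC' h x : EuclideanSpace ℝ (Fin m)) =
      ‖(x : EuclideanSpace ℝ (Fin n))‖ •
        (h ⟨‖(x : EuclideanSpace ℝ (Fin n))‖⁻¹ • (x : EuclideanSpace ℝ (Fin n)),
          mem_link hC x.2 hx0⟩ : EuclideanSpace ℝ (Fin m)) := by
  simp only [coneMap]; rw [dif_neg hx0]

private lemma link_norm (u : (C' ∩ Metric.sphere (0 : EuclideanSpace ℝ (Fin m)) 1 :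
    Set (EuclideanSpace ℝ (Fin m)))) : ‖(u : EuclideanSpace ℝ (Fin m))‖ = 1 :=
  mem_sphere_zero_iff_norm.mp u.2.2

private lemma coneMap_norm (x : C) :
    ‖(coneMap hC'0 hC hC' h x : EuclideanSpace ℝ (Fin m))‖ =
      ‖(x : EuclideanSpace ℝ (Fin n))‖ := by
  by_cases hx0 : (x : EuclideanSpace ℝ (Fin n)) = 0
  · rw [coneMap_zero hx0, hx0, norm_zero, norm_zero]
  · rw [coneMap_ne hx0, norm_smul, Real.norm_of_nonneg (norm_nonneg _), link_norm, mul_one]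

end cone

section est

variable {n m : ℕ} {C : Set (EuclideanSpace ℝ (Fin n))} {C' : Set (EuclideanSpace ℝ (Fin m))}
    {hC'0 : (0 : EuclideanSpace ℝ (Fin m)) ∈ C'}
    {hC : ∀ (t : ℝ), 0 ≤ t → ∀ x ∈ C, t • x ∈ C}
    {hC' : ∀ (t : ℝ), 0 ≤ t → ∀ y ∈ C', t • y ∈ C'}
    {h : (C ∩ Metric.sphere (0 : EuclideanSpace ℝ (Fin n)) 1 : Set (EuclideanSpace ℝ (Fin n))) →
         (C' ∩ Metric.sphere (0 : EuclideanSpace ℝ (Fin m)) 1 : Set (EuclideanSpace ℝ (Fin m)))}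

private lemma coneMap_est {K : ℝ} (hK : 1 ≤ K)
    (hlip : ∀ x y : (C ∩ Metric.sphere (0 : EuclideanSpace ℝ (Fin n)) 1 :
        Set (EuclideanSpace ℝ (Fin n))),
      (1 / K) * dist (x : EuclideanSpace ℝ (Fin n)) (y : EuclideanSpace ℝ (Fin n)) ≤
        dist (h x : EuclideanSpace ℝ (Fin m)) (h y : EuclideanSpace ℝ (Fin m)) ∧
      dist (h x : EuclideanSpace ℝ (Fin m)) (h y : EuclideanSpace ℝ (Fin m)) ≤
        K * dist (x : EuclideanSpace ℝ (Fin n)) (y : EuclideanSpace ℝ (Fin n)))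
    (v w : C) :
    dist (coneMap hC'0 hC hC' h v : EuclideanSpace ℝ (Fin m))
        (coneMap hC'0 hC hC' h w : EuclideanSpace ℝ (Fin m)) ≤
      (3 * K) * dist (v : EuclideanSpace ℝ (Fin n)) (w : EuclideanSpace ℝ (Fin n)) ∧
    dist (v : EuclideanSpace ℝ (Fin n)) (w : EuclideanSpace ℝ (Fin n)) ≤
      (3 * K) * dist (coneMap hC'0 hC hC' h v : EuclideanSpace ℝ (Fin m))
        (coneMap hC'0 hC hC' h w : EuclideanSpace ℝ (Fin m)) := by
  have hK0 : (0 : ℝ) < K := lt_of_lt_of_le one_pos hK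
  by_cases hv0 : (v : EuclideanSpace ℝ (Fin n)) = 0
  · by_cases hw0 : (w : EuclideanSpace ℝ (Fin n)) = 0
    · have e1 : dist (coneMap hC'0 hC hC' h v : EuclideanSpace ℝ (Fin m))
          (coneMap hC'0 hC hC' h w : EuclideanSpace ℝ (Fin m)) = 0 := by
        rw [coneMap_zero hv0, coneMap_zero hw0, dist_self]
      have e2 : dist (v : EuclideanSpace ℝ (Fin n)) (w : EuclideanSpace ℝ (Fin n)) = 0 := by
        rw [hv0, hw0, dist_self]
      rw [e1, e2]; norm_num
    · have e1 : dist (coneMap hC'0 hC hC' h v : EuclideanSpace ℝ (Fin m))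
          (coneMap hC'0 hC hC' h w : EuclideanSpace ℝ (Fin m)) =
            ‖(w : EuclideanSpace ℝ (Fin n))‖ := by
        rw [coneMap_zero hv0, dist_comm, dist_zero_right, coneMap_norm]
      have e2 : dist (v : EuclideanSpace ℝ (Fin n)) (w : EuclideanSpace ℝ (Fin n)) =
          ‖(w : EuclideanSpace ℝ (Fin n))‖ := by
        rw [hv0, dist_comm, dist_zero_right]
      rw [e1, e2]
      constructor <;> nlinarith [norm_nonneg (w : EuclideanSpace ℝ (Fin n))]
  · by_cases hw0 : (w : EuclideanSpace ℝ (Fin n)) = 0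
    · have e1 : dist (coneMap hC'0 hC hC' h v : EuclideanSpace ℝ (Fin m))
          (coneMap hC'0 hC hC' h w : EuclideanSpace ℝ (Fin m)) =
            ‖(v : EuclideanSpace ℝ (Fin n))‖ := by
        rw [coneMap_zero hw0, dist_zero_right, coneMap_norm]
      have e2 : dist (v : EuclideanSpace ℝ (Fin n)) (w : EuclideanSpace ℝ (Fin n)) =
          ‖(v : EuclideanSpace ℝ (Fin n))‖ := by
        rw [hw0, dist_zero_right]
      rw [e1, e2]
      constructor <;> nlinarith [norm_nonneg (v : EuclideanSpace ℝ (Fin n))]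
    · -- main case
      have hrne : ‖(v : EuclideanSpace ℝ (Fin n))‖ ≠ 0 := norm_ne_zero_iff.2 hv0
      have hsne : ‖(w : EuclideanSpace ℝ (Fin n))‖ ≠ 0 := norm_ne_zero_iff.2 hw0
      have hr : (0:ℝ) ≤ ‖(v : EuclideanSpace ℝ (Fin n))‖ := norm_nonneg _
      have hs : (0:ℝ) ≤ ‖(w : EuclideanSpace ℝ (Fin n))‖ := norm_nonneg _
      set u : (C ∩ Metric.sphere (0 : EuclideanSpace ℝ (Fin n)) 1 :
          Set (EuclideanSpace ℝ (Fin n))) :=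
        ⟨‖(v : EuclideanSpace ℝ (Fin n))‖⁻¹ • (v : EuclideanSpace ℝ (Fin n)),
          mem_link hC v.2 hv0⟩ with hu_def
      set u' : (C ∩ Metric.sphere (0 : EuclideanSpace ℝ (Fin n)) 1 :
          Set (EuclideanSpace ℝ (Fin n))) :=
        ⟨‖(w : EuclideanSpace ℝ (Fin n))‖⁻¹ • (w : EuclideanSpace ℝ (Fin n)),
          mem_link hC w.2 hw0⟩ with hu'_def
      have hun : ‖(u : EuclideanSpace ℝ (Fin n))‖ = 1 := mem_sphere_zero_iff_norm.mp u.2.2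
      have hu'n : ‖(u' : EuclideanSpace ℝ (Fin n))‖ = 1 := mem_sphere_zero_iff_norm.mp u'.2.2
      have hA : dist (v : EuclideanSpace ℝ (Fin n)) (w : EuclideanSpace ℝ (Fin n)) =
          ‖‖(v : EuclideanSpace ℝ (Fin n))‖ • (u : EuclideanSpace ℝ (Fin n)) -
            ‖(w : EuclideanSpace ℝ (Fin n))‖ • (u' : EuclideanSpace ℝ (Fin n))‖ := by
        rw [dist_eq_norm, hu_def, hu'_def]
        rw [smul_inv_smul₀ hrne, smul_inv_smul₀ hsne]
      have hB : dist (coneMap hC'0 hC hC' h v : EuclideanSpace ℝ (Fin m))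
          (coneMap hC'0 hC hC' h w : EuclideanSpace ℝ (Fin m)) =
          ‖‖(v : EuclideanSpace ℝ (Fin n))‖ • (h u : EuclideanSpace ℝ (Fin m)) -
            ‖(w : EuclideanSpace ℝ (Fin n))‖ • (h u' : EuclideanSpace ℝ (Fin m))‖ := by
        rw [dist_eq_norm, coneMap_ne hv0, coneMap_ne hw0]
      have kA := cone_key hun hu'n hr hs
      have kB := cone_key (link_norm (h u)) (link_norm (h u')) hr hs
      obtain ⟨hl1, hl2⟩ := hlip u u'
      rw [dist_eq_norm, dist_eq_norm] at hl1 hl2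
      rw [hA, hB]
      have ht : (0:ℝ) ≤ min ‖(v : EuclideanSpace ℝ (Fin n))‖ ‖(w : EuclideanSpace ℝ (Fin n))‖ :=
        le_min hr hs
      have hD0 : (0:ℝ) ≤ ‖(u : EuclideanSpace ℝ (Fin n)) - (u' : EuclideanSpace ℝ (Fin n))‖ :=
        norm_nonneg _
      have hD'0 : (0:ℝ) ≤ ‖(h u : EuclideanSpace ℝ (Fin m)) - (h u' : EuclideanSpace ℝ (Fin m))‖ :=
        norm_nonneg _
      have habs : (0:ℝ) ≤ |‖(v : EuclideanSpace ℝ (Fin n))‖ - ‖(w : EuclideanSpace ℝ (Fin n))‖| :=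
        abs_nonneg _
      have hD : ‖(u : EuclideanSpace ℝ (Fin n)) - (u' : EuclideanSpace ℝ (Fin n))‖ ≤
          K * ‖(h u : EuclideanSpace ℝ (Fin m)) - (h u' : EuclideanSpace ℝ (Fin m))‖ := by
        have h5 := mul_le_mul_of_nonneg_left hl1 (le_of_lt hK0)
        have h6 : K * ((1/K) * ‖(u : EuclideanSpace ℝ (Fin n)) - (u' : EuclideanSpace ℝ (Fin n))‖)
            = ‖(u : EuclideanSpace ℝ (Fin n)) - (u' : EuclideanSpace ℝ (Fin n))‖ := by
          field_simp
        linarith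
      constructor
      · nlinarith [kA.1, kA.2.1, kB.2.2, mul_le_mul_of_nonneg_left hl2 ht,
          mul_le_mul_of_nonneg_left kA.2.1 (le_of_lt hK0)]
      · nlinarith [kB.1, kB.2.1, kA.2.2, mul_le_mul_of_nonneg_left hD ht,
          mul_le_mul_of_nonneg_left kB.2.1 (le_of_lt hK0)]

end est

/-- If `C ⊆ ℝⁿ` and `C' ⊆ ℝᵐ` are cones (closed under multiplication by nonnegative reals,
and containing `0`) whose links `C ∩ S^{n-1}` and `C' ∩ S^{m-1}` are bi-Lipschitz
homeomorphic with respect to the outer metrics, then there is a bi-Lipschitz homeomorphism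
`H : C → C'` with `H 0 = 0`; in particular the germs `(C, 0)` and `(C', 0)` are
bi-Lipschitz equivalent. -/
theorem cones_biLipschitz_of_links_biLipschitz
    {n m : ℕ} (C : Set (EuclideanSpace ℝ (Fin n))) (C' : Set (EuclideanSpace ℝ (Fin m)))
    (hC0 : (0 : EuclideanSpace ℝ (Fin n)) ∈ C) (hC'0 : (0 : EuclideanSpace ℝ (Fin m)) ∈ C')
    (hC : ∀ (t : ℝ), 0 ≤ t → ∀ x ∈ C, t • x ∈ C)
    (hC' : ∀ (t : ℝ), 0 ≤ t → ∀ y ∈ C', t • y ∈ C')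
    (h : (C ∩ Metric.sphere (0 : EuclideanSpace ℝ (Fin n)) 1 : Set (EuclideanSpace ℝ (Fin n))) →
         (C' ∩ Metric.sphere (0 : EuclideanSpace ℝ (Fin m)) 1 : Set (EuclideanSpace ℝ (Fin m))))
    (hbij : Function.Bijective h)
    (K : ℝ) (hK : 1 ≤ K)
    (hlip : ∀ x y : (C ∩ Metric.sphere (0 : EuclideanSpace ℝ (Fin n)) 1 : Set (EuclideanSpace ℝ (Fin n))), (1 / K) * dist (x : EuclideanSpace ℝ (Fin n)) (y : EuclideanSpace ℝ (Fin n)) ≤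
        dist (h x : EuclideanSpace ℝ (Fin m)) (h y : EuclideanSpace ℝ (Fin m)) ∧
      dist (h x : EuclideanSpace ℝ (Fin m)) (h y : EuclideanSpace ℝ (Fin m)) ≤
        K * dist (x : EuclideanSpace ℝ (Fin n)) (y : EuclideanSpace ℝ (Fin n))) :
    ∃ H : C → C', Function.Bijective H ∧
      (H ⟨0, hC0⟩ : EuclideanSpace ℝ (Fin m)) = 0 ∧
      ∃ L : ℝ, 1 ≤ L ∧ ∀ v w : C,
        (1 / L) * dist (v : EuclideanSpace ℝ (Fin n)) (w : EuclideanSpace ℝ (Fin n)) ≤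
          dist (H v : EuclideanSpace ℝ (Fin m)) (H w : EuclideanSpace ℝ (Fin m)) ∧
        dist (H v : EuclideanSpace ℝ (Fin m)) (H w : EuclideanSpace ℝ (Fin m)) ≤
          L * dist (v : EuclideanSpace ℝ (Fin n)) (w : EuclideanSpace ℝ (Fin n)) := by

  have hK0 : (0:ℝ) < K := lt_of_lt_of_le one_pos hK
  refine ⟨coneMap hC'0 hC hC' h, ⟨?_, ?_⟩, coneMap_zero rfl, 3 * K, by linarith, ?_⟩
  · -- injective
    intro a b hab
    have hB : dist (coneMap hC'0 hC hC' h a : EuclideanSpace ℝ (Fin m))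
        (coneMap hC'0 hC hC' h b : EuclideanSpace ℝ (Fin m)) = 0 := by
      rw [hab, dist_self]
    have h2 := (coneMap_est (hC'0 := hC'0) (hC := hC) (hC' := hC') hK hlip a b).2
    rw [hB, mul_zero] at h2
    exact Subtype.ext (dist_le_zero.mp h2)
  · -- surjective
    intro y
    by_cases hy0 : (y : EuclideanSpace ℝ (Fin m)) = 0
    · exact ⟨⟨0, hC0⟩, Subtype.ext (by rw [coneMap_zero rfl, hy0])⟩
    · have hyne : ‖(y : EuclideanSpace ℝ (Fin m))‖ ≠ 0 := norm_ne_zero_iff.2 hy0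
      obtain ⟨u, hu⟩ := hbij.2
        ⟨‖(y : EuclideanSpace ℝ (Fin m))‖⁻¹ • (y : EuclideanSpace ℝ (Fin m)),
          mem_link hC' y.2 hy0⟩
      set x : EuclideanSpace ℝ (Fin n) :=
        ‖(y : EuclideanSpace ℝ (Fin m))‖ • (u : EuclideanSpace ℝ (Fin n)) with hx_def
      have hxC : x ∈ C := hC _ (norm_nonneg _) _ u.2.1
      have hxn : ‖x‖ = ‖(y : EuclideanSpace ℝ (Fin m))‖ := by
        rw [hx_def, norm_smul, Real.norm_of_nonneg (norm_nonneg _),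
          mem_sphere_zero_iff_norm.mp u.2.2, mul_one]
      have hx0 : x ≠ 0 := by
        rw [← norm_ne_zero_iff, hxn]; exact hyne
      refine ⟨⟨x, hxC⟩, Subtype.ext ?_⟩
      rw [coneMap_ne hx0]
      have harg : (⟨‖((⟨x, hxC⟩ : C) : EuclideanSpace ℝ (Fin n))‖⁻¹ •
          ((⟨x, hxC⟩ : C) : EuclideanSpace ℝ (Fin n)),
          mem_link hC (⟨x, hxC⟩ : C).2 hx0⟩ :
          (C ∩ Metric.sphere (0 : EuclideanSpace ℝ (Fin n)) 1 :
            Set (EuclideanSpace ℝ (Fin n)))) = u := by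
        apply Subtype.ext
        show ‖x‖⁻¹ • x = (u : EuclideanSpace ℝ (Fin n))
        rw [hxn, hx_def]
        exact inv_smul_smul₀ hyne _
      rw [harg, hu]
      show ‖x‖ • ‖(y : EuclideanSpace ℝ (Fin m))‖⁻¹ • (y : EuclideanSpace ℝ (Fin m)) =
        (y : EuclideanSpace ℝ (Fin m))
      rw [hxn]
      exact smul_inv_smul₀ hyne _
  · -- estimates
    intro v w
    have hest := coneMap_est (hC'0 := hC'0) (hC := hC) (hC' := hC') hK hlip v w
    constructor
    · have h7 : (1 / (3 * K)) *
          ((3 * K) * dist (coneMap hC'0 hC hC' h v : EuclideanSpace ℝ (Fin m))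
            (coneMap hC'0 hC hC' h w : EuclideanSpace ℝ (Fin m))) =
          dist (coneMap hC'0 hC hC' h v : EuclideanSpace ℝ (Fin m))
            (coneMap hC'0 hC hC' h w : EuclideanSpace ℝ (Fin m)) := by
        field_simp
      calc (1 / (3 * K)) * dist (v : EuclideanSpace ℝ (Fin n)) (w : EuclideanSpace ℝ (Fin n))
          ≤ (1 / (3 * K)) * ((3 * K) * dist (coneMap hC'0 hC hC' h v : EuclideanSpace ℝ (Fin m))
            (coneMap hC'0 hC hC' h w : EuclideanSpace ℝ (Fin m))) := by
            apply mul_le_mul_of_nonneg_left hest.2 (by positivity)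
        _ = _ := h7
    · exact hest.1
end
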